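/- arXiv:1712.00233 — 5 statements merged into one kernel-verified Lean document; each statement's English description precedes it below -/
import Mathlib

section
/- Let f : ∏_{n=1}^N Fin I_n → ℝ admit a tensor train representation with cores T^(n) : Fin I_n → Matrix (Fin R_{n-1}) (Fin R_n) ℝ (R_0 = R_N = 1), i.e. f(x) = T^(1)[x_1] · T^(2)[x_2] · ... · T^(N)[x_N] (the single entry of the resulting 1×1 matrix). For each subset α ⊆ {1,...,N}, define cores T_α^(n) by: T_α^(n)[j] := E[T^(n)] for n ∉ α, and T_α^(n)[j] := T^(n)[j] − E[T^(n)] for n ∈ α, where E[T^(n)] := Σ_{i} w_n(i)·T^(n)[i] is the average of the slices of the n-th core weighted by w_n. Then for every α and every x, the matrix product T_α^(1)[x_1] · ... · T_α^(N)[x_N] equals the ANOVA term f_α(x_α) of f with respect to the product measure w. -/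
open Finset

/-- Partial expectation `E_{-α}[f]` with respect to the product weights `w`:
sum over all points agreeing with `x` on `α`, weighted by the complement weights. -/
noncomputable def partialE {N : ℕ} {I : Fin N → ℕ} (w : ∀ n : Fin N, Fin (I n) → ℝ)
    (α : Finset (Fin N)) (f : ((n : Fin N) → Fin (I n)) → ℝ)
    (x : (n : Fin N) → Fin (I n)) : ℝ :=
  ∑ y ∈ Finset.univ.filter (fun y : (n : Fin N) → Fin (I n) => ∀ m ∈ α, y m = x m),
    (∏ m ∈ αᶜ, w m (y m)) * f y

/-- The ANOVA (Sobol) terms, defined by the recursion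
`f_α(x) = E_{-α}[f](x_α) - Σ_{β ⊊ α} f_β(x_β)` (so `f_∅ = E[f]`). -/
noncomputable def anova {N : ℕ} {I : Fin N → ℕ} (w : ∀ n : Fin N, Fin (I n) → ℝ)
    (f : ((n : Fin N) → Fin (I n)) → ℝ) (α : Finset (Fin N))
    (x : (n : Fin N) → Fin (I n)) : ℝ :=
  partialE w α f x - ∑ β ∈ (α.powerset.erase α).attach, anova w f β.1 x
termination_by α.card
decreasing_by
  have h := Finset.mem_erase.mp β.2
  exact Finset.card_lt_card (lt_of_le_of_ne (Finset.mem_powerset.mp h.2) h.1)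

/-- Ordered matrix product `A 0 * A 1 * ... * A (N-1)` of a chain of matrices with
compatible sizes `R 0 × R 1`, `R 1 × R 2`, ..., `R (N-1) × R N`. -/
def matChain {N : ℕ} (R : Fin (N+1) → ℕ)
    (A : ∀ n : Fin N, Matrix (Fin (R n.castSucc)) (Fin (R n.succ)) ℝ) :
    Matrix (Fin (R 0)) (Fin (R (Fin.last N))) ℝ :=
  Fin.induction (motive := fun i => Matrix (Fin (R 0)) (Fin (R i)) ℝ)
    1 (fun n M => M * A n) (Fin.last N)

/-- The matrix product `T^(1)[x_1] * ... * T^(N)[x_N]` of the tensor-train cores `T`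
evaluated at the multi-index `x`.  When `R 0 = R N = 1` this is a `1 × 1` matrix whose
single entry is the value of the represented tensor at `x`. -/
def ttProd {N : ℕ} {I : Fin N → ℕ} (R : Fin (N+1) → ℕ)
    (T : ∀ n : Fin N, Fin (I n) → Matrix (Fin (R n.castSucc)) (Fin (R n.succ)) ℝ)
    (x : ∀ n : Fin N, Fin (I n)) : Matrix (Fin (R 0)) (Fin (R (Fin.last N))) ℝ :=
  matChain R (fun n => T n (x n))



section chain
variable {N : ℕ} (R : Fin (N+1) → ℕ)

noncomputable def pchain (A : ∀ n : Fin N, Matrix (Fin (R n.castSucc)) (Fin (R n.succ)) ℝ) :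
    ∀ i : Fin (N+1), Matrix (Fin (R 0)) (Fin (R i)) ℝ :=
  Fin.induction (motive := fun i => Matrix (Fin (R 0)) (Fin (R i)) ℝ) 1 (fun n M => M * A n)

lemma pchain_zero (A) : pchain R A 0 = 1 := rfl

lemma pchain_succ (A) (n : Fin N) :
    pchain R A n.succ = pchain R A n.castSucc * A n := by
  simp [pchain, Fin.induction_succ]

lemma pchain_congr (A B) (i : Fin (N+1)) (h : ∀ n : Fin N, (n : ℕ) < (i : ℕ) → A n = B n) :
    pchain R A i = pchain R B i := by
  induction i using Fin.induction with
  | zero => rfl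
  | succ n ih =>
    rw [pchain_succ, pchain_succ, ih fun m hm => h m (by simp at hm ⊢; omega),
      h n (by simp)]

lemma pchain_sum {K : Fin N → Type} [∀ n, Fintype (K n)] [∀ n, DecidableEq (K n)]
    (c : ∀ n, K n → ℝ) (M : ∀ n, K n → Matrix (Fin (R n.castSucc)) (Fin (R n.succ)) ℝ)
    (y₀ : ∀ n, K n) (i : Fin (N+1)) :
    pchain R (fun n => ∑ k, c n k • M n k) i
      = ∑ y : ∀ n, K n,
          (∏ n : Fin N, (if (n : ℕ) < (i : ℕ) then c n (y n) else if y n = y₀ n then (1:ℝ) else 0))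
            • pchain R (fun n => M n (y n)) i := by
  induction i using Fin.induction with
  | zero =>
    have hc : ∀ y : ∀ n, K n,
        (∏ n : Fin N, (if (n : ℕ) < ((0 : Fin (N+1)) : ℕ) then c n (y n)
          else if y n = y₀ n then (1:ℝ) else 0)) = if y = y₀ then 1 else 0 := by
      intro y
      by_cases hy : y = y₀
      · subst hy; simp
      · obtain ⟨n, hn⟩ := Function.ne_iff.mp hy
        rw [if_neg hy]
        exact Finset.prod_eq_zero (Finset.mem_univ n) (by simp [hn])
    simp only [hc, pchain_zero]
    simp [ite_smul]
  | succ n ih =>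
    classical
    have hup : ∀ (y : ∀ m, K m) (k : K n),
        pchain R (fun m => M m (Function.update y n k m)) n.castSucc
          = pchain R (fun m => M m (y m)) n.castSucc := by
      intro y k
      refine pchain_congr R _ _ _ fun m hm => ?_
      have : m ≠ n := by
        intro h; subst h; simp at hm
      rw [Function.update_of_ne this]
    have hcoef : ∀ (y : ∀ m, K m) (k : K n),
        (∏ m : Fin N, if (m : ℕ) < ((n.castSucc : Fin (N+1)) : ℕ) then c m (y m)
            else if y m = y₀ m then (1:ℝ) else 0) * c n k
        = (if y n = y₀ n then (1:ℝ) else 0) *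
          ∏ m : Fin N, if (m : ℕ) < ((n.succ : Fin (N+1)) : ℕ) then c m (Function.update y n k m)
            else if Function.update y n k m = y₀ m then (1:ℝ) else 0 := by
      intro y k
      rw [← Finset.mul_prod_erase Finset.univ _ (Finset.mem_univ n),
        ← Finset.mul_prod_erase Finset.univ
          (fun m : Fin N => if (m : ℕ) < ((n.succ : Fin (N+1)) : ℕ) then c m (Function.update y n k m)
            else if Function.update y n k m = y₀ m then (1:ℝ) else 0) (Finset.mem_univ n)]
      have h1 : (if ((n:Fin N) : ℕ) < ((n.castSucc : Fin (N+1)) : ℕ) then c n (y n)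
          else if y n = y₀ n then (1:ℝ) else 0) = if y n = y₀ n then (1:ℝ) else 0 := by
        simp
      have h2 : (if ((n:Fin N) : ℕ) < ((n.succ : Fin (N+1)) : ℕ) then c n (Function.update y n k n)
          else if Function.update y n k n = y₀ n then (1:ℝ) else 0) = c n k := by
        simp
      rw [h1, h2]
      have h3 : ∏ m ∈ Finset.univ.erase n, (if (m : ℕ) < ((n.castSucc : Fin (N+1)) : ℕ) then c m (y m)
            else if y m = y₀ m then (1:ℝ) else 0)
          = ∏ m ∈ Finset.univ.erase n, (if (m : ℕ) < ((n.succ : Fin (N+1)) : ℕ) then c m (Function.update y n k m)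
            else if Function.update y n k m = y₀ m then (1:ℝ) else 0) := by
        refine Finset.prod_congr rfl fun m hm => ?_
        have hmn : m ≠ n := (Finset.mem_erase.mp hm).1
        have hval : (m : ℕ) ≠ (n : ℕ) := fun h => hmn (Fin.val_injective h)
        have hiff : ((m : ℕ) < ((n.castSucc : Fin (N+1)) : ℕ)) ↔
            ((m : ℕ) < ((n.succ : Fin (N+1)) : ℕ)) := by
          rw [Fin.coe_castSucc, Fin.val_succ]
          omega
        rw [Function.update_of_ne hmn, if_congr hiff rfl rfl]
      rw [h3]; ring
    rw [pchain_succ, ih]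
    rw [Matrix.sum_mul]
    have expand : ∀ y : ∀ m, K m,
        ((∏ m : Fin N, if (m : ℕ) < ((n.castSucc : Fin (N+1)) : ℕ) then c m (y m)
            else if y m = y₀ m then (1:ℝ) else 0)
          • pchain R (fun m => M m (y m)) n.castSucc) * (∑ k, c n k • M n k)
        = ∑ k : K n, ((∏ m : Fin N, if (m : ℕ) < ((n.castSucc : Fin (N+1)) : ℕ) then c m (y m)
            else if y m = y₀ m then (1:ℝ) else 0) * c n k)
            • (pchain R (fun m => M m (y m)) n.castSucc * M n k) := by
      intro y
      rw [Matrix.mul_sum]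
      refine Finset.sum_congr rfl fun k _ => ?_
      rw [Matrix.smul_mul, Matrix.mul_smul, smul_smul]
    simp only [expand]
    have rhs_succ : ∀ z : ∀ m, K m,
        pchain R (fun m => M m (z m)) n.succ
          = pchain R (fun m => M m (z m)) n.castSucc * M n (z n) := fun z => pchain_succ R _ n
    simp only [rhs_succ]
    have hbij : Function.Bijective
        (fun p : ((∀ m, K m) × K n) => (Function.update p.1 n p.2, p.1 n)) := by
      refine Function.Involutive.bijective fun p => ?_
      have h1 : Function.update (Function.update p.1 n p.2) n (p.1 n) = p.1 := by
        rw [Function.update_idem, Function.update_eq_self]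
      simp [h1]
    trans ∑ p : ((∀ m, K m) × K n),
        ((∏ m : Fin N, if (m : ℕ) < ((n.castSucc : Fin (N+1)) : ℕ) then c m (p.1 m)
            else if p.1 m = y₀ m then (1:ℝ) else 0) * c n p.2)
          • (pchain R (fun m => M m (p.1 m)) n.castSucc * M n p.2)
    · exact (Fintype.sum_prod_type (f := fun p : ((∀ m, K m) × K n) =>
        ((∏ m : Fin N, if (m : ℕ) < ((n.castSucc : Fin (N+1)) : ℕ) then c m (p.1 m)
            else if p.1 m = y₀ m then (1:ℝ) else 0) * c n p.2)
          • (pchain R (fun m => M m (p.1 m)) n.castSucc * M n p.2))).symm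
    trans ∑ q : ((∀ m, K m) × K n),
        ((if q.2 = y₀ n then (1:ℝ) else 0) *
          ∏ m : Fin N, if (m : ℕ) < ((n.succ : Fin (N+1)) : ℕ) then c m (q.1 m)
            else if q.1 m = y₀ m then (1:ℝ) else 0)
          • (pchain R (fun m => M m (q.1 m)) n.castSucc * M n (q.1 n))
    · refine Fintype.sum_bijective _ hbij _ _ fun p => ?_
      simp only
      rw [hcoef p.1 p.2, hup p.1 p.2, Function.update_self]
    rw [Fintype.sum_prod_type _]
    refine Finset.sum_congr rfl fun z _ => ?_
    dsimp only
    rw [← Finset.sum_smul]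
    simp
end chain

lemma anova_eq_sum {N : ℕ} {I : Fin N → ℕ} (w : ∀ n : Fin N, Fin (I n) → ℝ)
    (f : ((n : Fin N) → Fin (I n)) → ℝ) (x : (n : Fin N) → Fin (I n))
    (α : Finset (Fin N)) :
    anova w f α x = ∑ β ∈ α.powerset, (-1:ℝ)^(α.card - β.card) * partialE w β f x := by
  classical
  induction α using Finset.strongInduction with
  | _ α ih =>
    rw [anova, Finset.sum_attach (α.powerset.erase α) (fun β => anova w f β x)]
    have h1 : ∀ β ∈ α.powerset.erase α,
        anova w f β x = ∑ γ ∈ β.powerset, (-1:ℝ)^(β.card - γ.card) * partialE w γ f x := by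
      intro β hβ
      have h := Finset.mem_erase.mp hβ
      exact ih β (lt_of_le_of_ne (Finset.mem_powerset.mp h.2) h.1)
    rw [Finset.sum_congr rfl h1]
    have key : ∑ β ∈ α.powerset,
        (∑ γ ∈ β.powerset, (-1:ℝ)^(β.card - γ.card) * partialE w γ f x)
        = partialE w α f x := by
      have hps : ∀ β ∈ α.powerset,
          (∑ γ ∈ β.powerset, (-1:ℝ)^(β.card - γ.card) * partialE w γ f x)
          = ∑ γ ∈ α.powerset, (if γ ⊆ β then (-1:ℝ)^(β.card - γ.card) * partialE w γ f x else 0) := by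
        intro β hβ
        rw [← Finset.sum_filter]
        refine Finset.sum_congr ?_ fun γ _ => rfl
        ext γ
        simp only [Finset.mem_powerset, Finset.mem_filter]
        exact ⟨fun h => ⟨h.trans (Finset.mem_powerset.mp hβ), h⟩, fun h => h.2⟩
      rw [Finset.sum_congr rfl hps, Finset.sum_comm]
      have hS : ∀ γ ∈ α.powerset,
          (∑ β ∈ α.powerset, if γ ⊆ β then (-1:ℝ)^(β.card - γ.card) * partialE w γ f x else 0)
          = (if γ = α then 1 else 0) * partialE w γ f x := by
        intro γ hγ
        have hγα := Finset.mem_powerset.mp hγ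
        rw [← Finset.sum_filter]
        have hbij : ∑ β ∈ α.powerset.filter (fun β => γ ⊆ β),
            (-1:ℝ)^(β.card - γ.card) * partialE w γ f x
            = ∑ δ ∈ (α \ γ).powerset, (-1:ℝ)^(δ.card) * partialE w γ f x := by
          refine Finset.sum_nbij' (fun β => β \ γ) (fun δ => δ ∪ γ) ?_ ?_ ?_ ?_ ?_
          · intro β hβ
            simp only [Finset.mem_filter, Finset.mem_powerset] at hβ ⊢
            exact Finset.sdiff_subset_sdiff hβ.1 (le_refl γ)
          · intro δ hδ
            simp only [Finset.mem_powerset] at hδ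
            simp only [Finset.mem_filter, Finset.mem_powerset]
            exact ⟨Finset.union_subset (hδ.trans (Finset.sdiff_subset)) hγα,
              Finset.subset_union_right⟩
          · intro β hβ
            simp only [Finset.mem_filter] at hβ
            exact Finset.sdiff_union_of_subset hβ.2
          · intro δ hδ
            simp only [Finset.mem_powerset] at hδ
            exact Finset.union_sdiff_cancel_right
              (Finset.disjoint_of_subset_left hδ Finset.sdiff_disjoint)
          · intro β hβ
            simp only [Finset.mem_filter] at hβ
            rw [Finset.card_sdiff_of_subset hβ.2]
        rw [hbij, ← Finset.sum_mul]
        congr 1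
        have : (∑ δ ∈ (α \ γ).powerset, (-1:ℝ)^(δ.card))
            = (((∑ δ ∈ (α \ γ).powerset, (-1:ℤ)^(δ.card)) : ℤ) : ℝ) := by push_cast; rfl
        rw [this, Finset.sum_powerset_neg_one_pow_card]
        by_cases h : γ = α
        · subst h; simp
        · rw [if_neg h, if_neg ?_]
          · simp
          · intro hempty
            exact h (Finset.Subset.antisymm hγα
              (by rw [← Finset.sdiff_eq_empty_iff_subset] at *; exact hempty))
      rw [Finset.sum_congr rfl hS]
      simp only [boole_mul]
      rw [Finset.sum_ite_eq' α.powerset α (fun γ => partialE w γ f x),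
        if_pos (Finset.mem_powerset_self α)]
    have hmem : α ∈ α.powerset := Finset.mem_powerset_self α
    have := Finset.add_sum_erase α.powerset
      (fun β => ∑ γ ∈ β.powerset, (-1:ℝ)^(β.card - γ.card) * partialE w γ f x) hmem
    rw [key] at this
    linarith

lemma matChain_eq_pchain {N : ℕ} (R : Fin (N+1) → ℕ)
    (A : ∀ n : Fin N, Matrix (Fin (R n.castSucc)) (Fin (R n.succ)) ℝ) :
    matChain R A = pchain R A (Fin.last N) := rfl

lemma matChain_sum {N : ℕ} (R : Fin (N+1) → ℕ) {K : Fin N → Type}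
    [∀ n, Fintype (K n)] [∀ n, DecidableEq (K n)] [∀ n, Nonempty (K n)]
    (c : ∀ n, K n → ℝ) (M : ∀ n, K n → Matrix (Fin (R n.castSucc)) (Fin (R n.succ)) ℝ) :
    matChain R (fun n => ∑ k, c n k • M n k)
      = ∑ y : ∀ n, K n, (∏ n : Fin N, c n (y n)) • matChain R (fun n => M n (y n)) := by
  classical
  have y₀ : ∀ n, K n := fun n => Classical.arbitrary (K n)
  rw [matChain_eq_pchain, pchain_sum R c M y₀]
  refine Finset.sum_congr rfl fun y _ => ?_
  rw [matChain_eq_pchain]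
  congr 1
  refine Finset.prod_congr rfl fun n _ => ?_
  rw [if_pos]
  rw [Fin.val_last]
  exact n.isLt

lemma matChain_ite_partialE {N : ℕ} {I : Fin N → ℕ} (hI : ∀ n, 1 ≤ I n)
    (w : ∀ n : Fin N, Fin (I n) → ℝ) (R : Fin (N+1) → ℕ)
    (T : ∀ n : Fin N, Fin (I n) → Matrix (Fin (R n.castSucc)) (Fin (R n.succ)) ℝ)
    (f : ((n : Fin N) → Fin (I n)) → ℝ)
    (hf : ∀ x (i : Fin (R 0)) (j : Fin (R (Fin.last N))), f x = ttProd R T x i j)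
    (β : Finset (Fin N)) (x : (n : Fin N) → Fin (I n))
    (i : Fin (R 0)) (j : Fin (R (Fin.last N))) :
    matChain R (fun n => if n ∈ β then T n (x n) else ∑ i', w n i' • T n i') i j
      = partialE w β f x := by
  classical
  haveI : ∀ n, Nonempty (Fin (I n)) := fun n => ⟨⟨0, hI n⟩⟩
  have hcore : (fun n => if n ∈ β then T n (x n) else ∑ i', w n i' • T n i')
      = fun n => ∑ k, (if n ∈ β then (if k = x n then (1:ℝ) else 0) else w n k) • T n k := by
    funext n
    by_cases hn : n ∈ β
    · rw [if_pos hn]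
      symm
      calc ∑ k, (if n ∈ β then (if k = x n then (1:ℝ) else 0) else w n k) • T n k
          = ∑ k, (if k = x n then T n k else 0) := by
            refine Finset.sum_congr rfl fun k _ => ?_
            rw [if_pos hn]; split_ifs <;> simp
        _ = T n (x n) := by
            rw [Finset.sum_ite_eq' Finset.univ (x n) (T n), if_pos (Finset.mem_univ _)]
    · simp [hn]
  rw [hcore, matChain_sum R _ T]
  rw [Matrix.sum_apply]
  have hterm : ∀ y : (n : Fin N) → Fin (I n),
      ((∏ n : Fin N, if n ∈ β then (if y n = x n then (1:ℝ) else 0) else w n (y n))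
        • matChain R (fun n => T n (y n))) i j
      = (if (∀ m ∈ β, y m = x m) then (1:ℝ) else 0) * ((∏ m ∈ βᶜ, w m (y m)) * f y) := by
    intro y
    rw [Matrix.smul_apply, smul_eq_mul]
    have hmc : matChain R (fun n => T n (y n)) i j = f y := (hf y i j).symm
    rw [hmc]
    have h1 : (∏ n : Fin N, if n ∈ β then (if y n = x n then (1:ℝ) else 0) else w n (y n))
        = (if (∀ m ∈ β, y m = x m) then (1:ℝ) else 0) * (∏ m ∈ βᶜ, w m (y m)) := by
      rw [← Finset.prod_mul_prod_compl β]
      congr 1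
      · rw [Finset.prod_congr rfl fun m (hm : m ∈ β) => if_pos hm, Finset.prod_boole]
        congr
      · refine Finset.prod_congr rfl fun m hm => ?_
        rw [if_neg (Finset.mem_compl.mp hm)]
    rw [h1]
    ring
  rw [Finset.sum_congr rfl fun y _ => hterm y]
  rw [partialE, Finset.sum_filter]
  refine Finset.sum_congr rfl fun y _ => ?_
  rw [boole_mul]

lemma matChain_alpha_expand {N : ℕ} {I : Fin N → ℕ} (hI : ∀ n, 1 ≤ I n)
    (w : ∀ n : Fin N, Fin (I n) → ℝ) (R : Fin (N+1) → ℕ)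
    (T : ∀ n : Fin N, Fin (I n) → Matrix (Fin (R n.castSucc)) (Fin (R n.succ)) ℝ)
    (f : ((n : Fin N) → Fin (I n)) → ℝ)
    (hf : ∀ x (i : Fin (R 0)) (j : Fin (R (Fin.last N))), f x = ttProd R T x i j)
    (α : Finset (Fin N)) (x : (n : Fin N) → Fin (I n))
    (i : Fin (R 0)) (j : Fin (R (Fin.last N))) :
    matChain R (fun n => if n ∈ α then T n (x n) - (∑ i', w n i' • T n i')
        else ∑ i', w n i' • T n i') i j
      = ∑ β ∈ α.powerset, (-1:ℝ)^(α.card - β.card) * partialE w β f x := by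
  classical
  set E : ∀ n : Fin N, Matrix (Fin (R n.castSucc)) (Fin (R n.succ)) ℝ :=
    fun n => ∑ i', w n i' • T n i' with hE
  have hcore : (fun n => if n ∈ α then T n (x n) - E n else E n)
      = fun n => ∑ b : Bool, (if n ∈ α then (if b then (1:ℝ) else -1) else (if b then 0 else 1)) •
          (if b then T n (x n) else E n) := by
    funext n
    rw [Fintype.sum_bool]
    by_cases hn : n ∈ α
    · simp [hn, sub_eq_add_neg]
    · simp [hn]
  rw [show (fun n => if n ∈ α then T n (x n) - (∑ i', w n i' • T n i')
        else ∑ i', w n i' • T n i') = (fun n => if n ∈ α then T n (x n) - E n else E n) from rfl,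
    hcore, matChain_sum R _ _, Matrix.sum_apply]
  rw [← Fintype.sum_equiv
    (⟨fun s => (fun n : Fin N => decide (n ∈ s)),
      fun g => Finset.univ.filter (fun n => g n = true),
      fun s => by ext n; simp, fun g => by funext n; simp⟩ :
        Finset (Fin N) ≃ (Fin N → Bool))
    (fun s => ((∏ n : Fin N, (if n ∈ α then (if decide (n ∈ s) then (1:ℝ) else -1)
        else (if decide (n ∈ s) then (0:ℝ) else 1)))
      • matChain R (fun n => if decide (n ∈ s) then T n (x n) else E n)) i j)
    _ (fun s => rfl)]
  have hterm : ∀ s : Finset (Fin N),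
      ((∏ n : Fin N, (if n ∈ α then (if decide (n ∈ s) then (1:ℝ) else -1)
          else (if decide (n ∈ s) then (0:ℝ) else 1)))
        • matChain R (fun n => if decide (n ∈ s) then T n (x n) else E n)) i j
      = if s ⊆ α then (-1:ℝ)^(α.card - s.card) * partialE w s f x else 0 := by
    intro s
    rw [Matrix.smul_apply, smul_eq_mul]
    have hmc : matChain R (fun n => if decide (n ∈ s) then T n (x n) else E n)
        = matChain R (fun n => if n ∈ s then T n (x n) else E n) := by
      refine congrArg _ (funext fun n => ?_)
      by_cases hn : n ∈ s <;> simp [hn]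
    by_cases hs : s ⊆ α
    · rw [if_pos hs, hmc]
      have hpe : matChain R (fun n => if n ∈ s then T n (x n) else E n) i j
          = partialE w s f x := matChain_ite_partialE hI w R T f hf s x i j
      rw [hpe]
      congr 1
      rw [← Finset.prod_mul_prod_compl α]
      have hca : (∏ n ∈ αᶜ, (if n ∈ α then (if decide (n ∈ s) then (1:ℝ) else -1)
          else (if decide (n ∈ s) then (0:ℝ) else 1))) = 1 := by
        refine Finset.prod_eq_one fun n hn => ?_
        have hna := Finset.mem_compl.mp hn
        have hns : n ∉ s := fun h => hna (hs h)
        rw [if_neg hna]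
        simp [hns]
      rw [hca, mul_one]
      have hsplit : (∏ n ∈ α, (if n ∈ α then (if decide (n ∈ s) then (1:ℝ) else -1)
          else (if decide (n ∈ s) then (0:ℝ) else 1)))
          = ∏ n ∈ α, (if n ∈ s then (1:ℝ) else -1) := by
        refine Finset.prod_congr rfl fun n hn => ?_
        rw [if_pos hn]
        by_cases hns : n ∈ s <;> simp [hns]
      rw [hsplit]
      have h1 : (∏ n ∈ s, (if n ∈ s then (1:ℝ) else -1)) = 1 :=
        Finset.prod_eq_one fun n hn => if_pos hn
      have h2 : (∏ n ∈ α \ s, (if n ∈ s then (1:ℝ) else -1)) = (-1:ℝ)^((α \ s).card) := by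
        rw [← Finset.prod_const]
        refine Finset.prod_congr rfl fun n hn => ?_
        rw [if_neg (Finset.mem_sdiff.mp hn).2]
      conv_lhs => rw [← Finset.union_sdiff_of_subset hs,
        Finset.prod_union Finset.disjoint_sdiff]
      rw [h1, h2, one_mul, Finset.card_sdiff_of_subset hs]
    · rw [if_neg hs]
      obtain ⟨n, hns, hnα⟩ := Finset.not_subset.mp hs
      have hz : (∏ n : Fin N, (if n ∈ α then (if decide (n ∈ s) then (1:ℝ) else -1)
          else (if decide (n ∈ s) then (0:ℝ) else 1))) = 0 := by
        refine Finset.prod_eq_zero (Finset.mem_univ n) ?_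
        rw [if_neg hnα]
        simp [hns]
      rw [hz, zero_mul]
  rw [Finset.sum_congr rfl fun s _ => hterm s]
  rw [← Finset.sum_filter]
  refine Finset.sum_congr ?_ fun s _ => rfl
  ext s
  simp [Finset.mem_powerset]

/-- Proposition 1 of the paper: given a TT surrogate
`f(x) = T^(1)[x_1] ⋯ T^(N)[x_N]`, the cores
`T_α^(n)[j] := E[T^(n)]` for `n ∉ α` and `T_α^(n)[j] := T^(n)[j] - E[T^(n)]` for `n ∈ α`
(with `E[T^(n)] := Σ_i w_n(i) • T^(n)[i]`) represent exactly the ANOVA term `f_α`. -/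
theorem sobol_tt_cores_represent_anova_term
    {N : ℕ} (hN : 1 ≤ N) {I : Fin N → ℕ} (hI : ∀ n, 1 ≤ I n)
    (w : ∀ n : Fin N, Fin (I n) → ℝ)
    (hw0 : ∀ n i, 0 ≤ w n i) (hw1 : ∀ n, ∑ i, w n i = 1)
    (R : Fin (N+1) → ℕ) (hR0 : R 0 = 1) (hRN : R (Fin.last N) = 1)
    (T : ∀ n : Fin N, Fin (I n) → Matrix (Fin (R n.castSucc)) (Fin (R n.succ)) ℝ)
    (f : ((n : Fin N) → Fin (I n)) → ℝ)
    (hf : ∀ x (i : Fin (R 0)) (j : Fin (R (Fin.last N))), f x = ttProd R T x i j)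
    (α : Finset (Fin N)) (x : (n : Fin N) → Fin (I n))
    (i : Fin (R 0)) (j : Fin (R (Fin.last N))) :
    ttProd R
      (fun n k =>
        if n ∈ α then T n k - ∑ i', w n i' • T n i' else ∑ i', w n i' • T n i')
      x i j
    = anova w f α x := by
  rw [anova_eq_sum w f x α]
  exact matChain_alpha_expand hI w R T f hf α x i j
end

section
/- Let f : ∏_{n=1}^N Fin I_n → ℝ admit a tensor train representation with cores T^(n) : Fin I_n → Matrix (Fin R_{n-1}) (Fin R_n) ℝ (R_0 = R_N = 1), so f(x) = T^(1)[x_1] · ... · T^(N)[x_N]. Define extended cores T_*^(n) : Fin (I_n + 1) → Matrix (Fin R_{n-1}) (Fin R_n) ℝ by T_*^(n)[0] := E[T^(n)] := Σ_i w_n(i)·T^(n)[i] and T_*^(n)[j] := T^(n)[j−1] − E[T^(n)] for j = 1,...,I_n. Then for every subset α ⊆ {1,...,N} and every point x ∈ ∏_n Fin I_n, the matrix product T_*^(1)[j_1] · ... · T_*^(N)[j_N], where j_n := 0 if n ∉ α and j_n := x_n + 1 if n ∈ α, equals the ANOVA term f_α(x_α) of f with respect to the product measure w. -/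
open Finset

section chainML
variable {N : ℕ} (R : Fin (N+1) → ℕ)

def matChainTo (A : ∀ n : Fin N, Matrix (Fin (R n.castSucc)) (Fin (R n.succ)) ℝ)
    (i : Fin (N+1)) : Matrix (Fin (R 0)) (Fin (R i)) ℝ :=
  Fin.induction (motive := fun i => Matrix (Fin (R 0)) (Fin (R i)) ℝ)
    1 (fun n M => M * A n) i

lemma matChainTo_succ (A) (n : Fin N) :
    matChainTo R A n.succ = matChainTo R A n.castSucc * A n := by
  simp [matChainTo]

lemma matChainTo_congr {A B} (i : Fin (N+1))
    (h : ∀ n : Fin N, n.castSucc < i → A n = B n) :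
    matChainTo R A i = matChainTo R B i := by
  induction i using Fin.induction with
  | zero => rfl
  | succ n ih =>
    rw [matChainTo_succ, matChainTo_succ, h n ((Fin.castSucc_lt_succ : n.castSucc < n.succ)),
      ih (fun m hm => h m (hm.trans ((Fin.castSucc_lt_succ : n.castSucc < n.succ))))]

lemma matChainTo_update_add (A) (n : Fin N) (X Y) (i : Fin (N+1)) (hn : n.castSucc < i) :
    matChainTo R (Function.update A n (X + Y)) i
      = matChainTo R (Function.update A n X) i + matChainTo R (Function.update A n Y) i := by
  induction i using Fin.induction with
  | zero => exact absurd hn (by simp [Fin.lt_def])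
  | succ m ih =>
    rcases eq_or_ne n m with rfl | hne
    · have hc : ∀ Z, matChainTo R (Function.update A n Z) n.castSucc
          = matChainTo R A n.castSucc := by
        intro Z
        refine matChainTo_congr R _ (fun k hk => ?_)
        exact Function.update_of_ne (ne_of_lt (Fin.castSucc_lt_castSucc_iff.mp hk)) _ _
      rw [matChainTo_succ, matChainTo_succ, matChainTo_succ]
      simp only [hc, Function.update_self]
      exact Matrix.mul_add _ X Y
    · have h' : n.castSucc < m.castSucc := by
        have h2 : (n : ℕ) ≠ (m : ℕ) := Fin.val_ne_of_ne hne
        have h1 : (n : ℕ) < (m : ℕ) + 1 := hn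
        exact Fin.lt_def.mpr (by simp only [Fin.coe_castSucc]; omega)
      rw [matChainTo_succ, matChainTo_succ, matChainTo_succ,
        Function.update_of_ne hne.symm, Function.update_of_ne hne.symm,
        Function.update_of_ne hne.symm, ih h', Matrix.add_mul]

lemma matChainTo_update_smul (A) (n : Fin N) (c : ℝ) (X) (i : Fin (N+1))
    (hn : n.castSucc < i) :
    matChainTo R (Function.update A n (c • X)) i
      = c • matChainTo R (Function.update A n X) i := by
  induction i using Fin.induction with
  | zero => exact absurd hn (by simp [Fin.lt_def])
  | succ m ih =>
    rcases eq_or_ne n m with rfl | hne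
    · have hc : ∀ Z, matChainTo R (Function.update A n Z) n.castSucc
          = matChainTo R A n.castSucc := by
        intro Z
        refine matChainTo_congr R _ (fun k hk => ?_)
        exact Function.update_of_ne (ne_of_lt (Fin.castSucc_lt_castSucc_iff.mp hk)) _ _
      rw [matChainTo_succ, matChainTo_succ]
      simp only [hc, Function.update_self]
      exact Matrix.mul_smul _ c X
    · have h' : n.castSucc < m.castSucc := by
        have h2 : (n : ℕ) ≠ (m : ℕ) := Fin.val_ne_of_ne hne
        have h1 : (n : ℕ) < (m : ℕ) + 1 := hn
        exact Fin.lt_def.mpr (by simp only [Fin.coe_castSucc]; omega)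
      rw [matChainTo_succ, matChainTo_succ,
        Function.update_of_ne hne.symm, Function.update_of_ne hne.symm, ih h',
        Matrix.smul_mul]


noncomputable def matChainML :
    MultilinearMap ℝ (fun n : Fin N => Matrix (Fin (R n.castSucc)) (Fin (R n.succ)) ℝ)
      (Matrix (Fin (R 0)) (Fin (R (Fin.last N))) ℝ) where
  toFun A := matChainTo R A (Fin.last N)
  map_update_add' A n X Y := by
    convert matChainTo_update_add R A n X Y _ (Fin.castSucc_lt_last n) using 3
    all_goals congr!
  map_update_smul' A n c X := by
    convert matChainTo_update_smul R A n c X _ (Fin.castSucc_lt_last n) using 3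
    all_goals congr!

end chainML

section main
variable {N : ℕ} {I : Fin N → ℕ} (R : Fin (N+1) → ℕ)
  (w : ∀ n : Fin N, Fin (I n) → ℝ)
  (T : ∀ n : Fin N, Fin (I n) → Matrix (Fin (R n.castSucc)) (Fin (R n.succ)) ℝ)


lemma ML_avg (f : ((n : Fin N) → Fin (I n)) → ℝ)
    (x : (n : Fin N) → Fin (I n)) (i : Fin (R 0)) (j : Fin (R (Fin.last N)))
    (hf : ∀ y, f y = matChainML R (fun n => T n (y n)) i j) (β : Finset (Fin N)) :
    matChainML R (fun n => if n ∈ β then T n (x n) else ∑ i', w n i' • T n i') i j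
      = partialE w β f x := by
  have h1 : (fun n => if n ∈ β then T n (x n) else ∑ i', w n i' • T n i')
      = fun n => ∑ i' ∈ (if n ∈ β then ({x n} : Finset (Fin (I n))) else Finset.univ),
          (if n ∈ β then (1:ℝ) else w n i') • T n i' := by
    funext n; by_cases h : n ∈ β <;> simp [h]
  have h2 : (Finset.univ.filter fun y : (n : Fin N) → Fin (I n) => ∀ m ∈ β, y m = x m)
      = Fintype.piFinset (fun n => if n ∈ β then ({x n} : Finset (Fin (I n))) else Finset.univ) := by
    ext y
    simp only [Finset.mem_filter, Finset.mem_univ, true_and, Fintype.mem_piFinset]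
    constructor
    · intro h n; by_cases hn : n ∈ β <;> simp [hn, h n]
    · intro h n hn; have := h n; simpa [hn] using this
  rw [h1, MultilinearMap.map_sum_finset, partialE, h2, Matrix.sum_apply]
  refine Finset.sum_congr rfl (fun y hy => ?_)
  have hy' : ∀ n ∈ β, y n = x n := by
    intro n hn
    have := Fintype.mem_piFinset.mp hy n
    simpa [hn] using this
  have h3 : (matChainML R fun n => (if n ∈ β then (1:ℝ) else w n (y n)) • T n (y n))
      = (∏ n, if n ∈ β then (1:ℝ) else w n (y n)) • matChainML R (fun n => T n (y n)) :=
    MultilinearMap.map_smul_univ _ _ _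
  rw [h3, Matrix.smul_apply, ← hf y, smul_eq_mul]
  congr 1
  rw [← Finset.prod_mul_prod_compl β]
  have hb : ∏ n ∈ β, (if n ∈ β then (1:ℝ) else w n (y n)) = 1 :=
    Finset.prod_eq_one (fun n hn => by simp [hn])
  rw [hb, one_mul]
  exact Finset.prod_congr rfl (fun n hn => by simp [Finset.mem_compl.mp hn])


lemma ML_anova (f : ((n : Fin N) → Fin (I n)) → ℝ)
    (x : (n : Fin N) → Fin (I n)) (i : Fin (R 0)) (j : Fin (R (Fin.last N)))
    (hf : ∀ y, f y = matChainML R (fun n => T n (y n)) i j) (α : Finset (Fin N)) :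
    matChainML R (α.piecewise (fun n => T n (x n) - ∑ i', w n i' • T n i')
        (fun n => ∑ i', w n i' • T n i')) i j = anova w f α x := by
  induction α using Finset.strongInduction with
  | _ α ih =>
    have hexp := (matChainML R).map_piecewise_add
      (fun n => T n (x n) - ∑ i', w n i' • T n i') (fun n => ∑ i', w n i' • T n i') α
    have hmm : ((fun n => T n (x n) - ∑ i', w n i' • T n i')
          + fun n : Fin N => ∑ i', w n i' • T n i')
        = fun n => T n (x n) := by funext n; simp
    rw [hmm] at hexp
    have hsum : (α.piecewise (fun n => T n (x n)) (fun n => ∑ i', w n i' • T n i'))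
        = fun n => if n ∈ α then T n (x n) else ∑ i', w n i' • T n i' := by
      funext n; by_cases h : n ∈ α <;> simp [h, Finset.piecewise]
    have hPE : partialE w α f x
        = ∑ β ∈ α.powerset, (matChainML R (β.piecewise
            (fun n => T n (x n) - ∑ i', w n i' • T n i')
            (fun n => ∑ i', w n i' • T n i'))) i j := by
      rw [← ML_avg R w T f x i j hf α, ← hsum, hexp, Matrix.sum_apply]
    have hsplit := Finset.sum_erase_add α.powerset
      (fun β => (matChainML R (β.piecewise
        (fun n => T n (x n) - ∑ i', w n i' • T n i')
        (fun n => ∑ i', w n i' • T n i'))) i j) (Finset.mem_powerset_self α)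
    rw [anova, Finset.sum_attach (α.powerset.erase α) (fun β => anova w f β x)]
    have hih : ∑ β ∈ α.powerset.erase α, anova w f β x
        = ∑ β ∈ α.powerset.erase α, (matChainML R (β.piecewise
            (fun n => T n (x n) - ∑ i', w n i' • T n i')
            (fun n => ∑ i', w n i' • T n i'))) i j := by
      refine Finset.sum_congr rfl (fun β hβ => ?_)
      have h := Finset.mem_erase.mp hβ
      exact (ih β (lt_of_le_of_ne (Finset.mem_powerset.mp h.2) h.1)).symm
    rw [hih, hPE, ← hsplit]
    ring

end main


/-- the extended cores `T_*^(n)` with first slice `E[T^(n)]` and slices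
`T^(n)[j-1] - E[T^(n)]` for `j = 1, ..., I_n`, evaluated at `j_n = 0` for `n ∉ α` and
`j_n = x_n + 1` for `n ∈ α`, reproduce the ANOVA term `f_α(x_α)`. -/
theorem extended_tt_cores_encode_all_anova_terms
    {N : ℕ} (hN : 1 ≤ N) {I : Fin N → ℕ} (hI : ∀ n, 1 ≤ I n)
    (w : ∀ n : Fin N, Fin (I n) → ℝ)
    (hw0 : ∀ n i, 0 ≤ w n i) (hw1 : ∀ n, ∑ i, w n i = 1)
    (R : Fin (N+1) → ℕ) (hR0 : R 0 = 1) (hRN : R (Fin.last N) = 1)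
    (T : ∀ n : Fin N, Fin (I n) → Matrix (Fin (R n.castSucc)) (Fin (R n.succ)) ℝ)
    (f : ((n : Fin N) → Fin (I n)) → ℝ)
    (hf : ∀ x (i : Fin (R 0)) (j : Fin (R (Fin.last N))), f x = ttProd R T x i j)
    (α : Finset (Fin N)) (x : (n : Fin N) → Fin (I n))
    (i : Fin (R 0)) (j : Fin (R (Fin.last N))) :
    ttProd (I := fun n => I n + 1) R
      (fun n k =>
        if h : k = 0 then ∑ i', w n i' • T n i'
        else T n (k.pred h) - ∑ i', w n i' • T n i')
      (fun n => if n ∈ α then (x n).succ else 0)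
      i j
    = anova w f α x := by
  have hslot : (fun n => (fun (n : Fin N) (k : Fin (I n + 1)) =>
        if h : k = 0 then ∑ i', w n i' • T n i'
        else T n (k.pred h) - ∑ i', w n i' • T n i') n
          ((fun n => if n ∈ α then (x n).succ else 0) n))
      = α.piecewise (fun n => T n (x n) - ∑ i', w n i' • T n i')
          (fun n => ∑ i', w n i' • T n i') := by
    funext n
    by_cases hn : n ∈ α
    · simp [hn, Finset.piecewise, Fin.succ_ne_zero]
    · simp [hn, Finset.piecewise]
  have key : ttProd (I := fun n => I n + 1) R
      (fun n k =>
        if h : k = 0 then ∑ i', w n i' • T n i'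
        else T n (k.pred h) - ∑ i', w n i' • T n i')
      (fun n => if n ∈ α then (x n).succ else 0)
    = matChainML R (α.piecewise (fun n => T n (x n) - ∑ i', w n i' • T n i')
        (fun n => ∑ i', w n i' • T n i')) := by
    show matChainTo R _ (Fin.last N) = matChainTo R _ (Fin.last N)
    rw [hslot]
  rw [key]
  exact ML_anova R w T f x i j (fun y => hf y i j) α
end

section
/- For any f : ∏_{n=1}^N Fin I_n → ℝ, the ANOVA terms are mutually orthogonal with respect to the product measure w: for all subsets α ≠ β of {1,...,N}, E[f_α · f_β] = Σ_x w(x) f_α(x_α) f_β(x_β) = 0. -/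
open Finset

section Aux

variable {N : ℕ} {I : Fin N → ℕ} (w : ∀ n : Fin N, Fin (I n) → ℝ)
    (f : ((n : Fin N) → Fin (I n)) → ℝ)

lemma anova_eq (α : Finset (Fin N)) (x : (n : Fin N) → Fin (I n)) :
    anova w f α x = partialE w α f x - ∑ β ∈ α.powerset.erase α, anova w f β x := by
  rw [anova]
  congr 1
  exact Finset.sum_attach (α.powerset.erase α) (fun β => anova w f β x)

lemma partialE_congr (α : Finset (Fin N)) {x y : (n : Fin N) → Fin (I n)}
    (hxy : ∀ m ∈ α, x m = y m) : partialE w α f x = partialE w α f y := by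
  unfold partialE
  apply Finset.sum_congr _ (fun _ _ => rfl)
  apply Finset.filter_congr
  intro z _
  constructor
  · intro h m hm; rw [h m hm, hxy m hm]
  · intro h m hm; rw [h m hm, ← hxy m hm]

lemma anova_congr (α : Finset (Fin N)) : ∀ {x y : (n : Fin N) → Fin (I n)},
    (∀ m ∈ α, x m = y m) → anova w f α x = anova w f α y := by
  induction α using Finset.strongInduction with
  | _ α ih =>
    intro x y hxy
    rw [anova_eq, anova_eq]
    congr 1
    · exact partialE_congr w f α hxy
    · apply Finset.sum_congr rfl
      intro β hβ
      have hβ' := Finset.mem_erase.mp hβ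
      have hsub : β ⊂ α := lt_of_le_of_ne (Finset.mem_powerset.mp hβ'.2) hβ'.1
      exact ih β hsub (fun m hm => hxy m (hsub.1 hm))

lemma partialE_eq_sum_anova (α : Finset (Fin N)) (x : (n : Fin N) → Fin (I n)) :
    partialE w α f x = ∑ β ∈ α.powerset, anova w f β x := by
  have h : α.powerset = insert α (α.powerset.erase α) := by
    rw [Finset.insert_erase (Finset.mem_powerset_self α)]
  rw [h, Finset.sum_insert (Finset.notMem_erase _ _), anova_eq]
  ring

lemma sum_w_partialE {α : Finset (Fin N)} {n : Fin N} (hn : n ∈ α)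
    (x : (n : Fin N) → Fin (I n)) :
    ∑ i, w n i * partialE w α f (Function.update x n i) =
      partialE w (α.erase n) f x := by
  unfold partialE
  have hset : ∀ i : Fin (I n),
      (Finset.univ.filter (fun y : (m : Fin N) → Fin (I m) =>
        ∀ m ∈ α, y m = Function.update x n i m)) =
      (Finset.univ.filter (fun y : (m : Fin N) → Fin (I m) =>
        ∀ m ∈ α.erase n, y m = x m)).filter (fun y => y n = i) := by
    intro i
    ext y
    simp only [Finset.mem_filter, Finset.mem_univ, true_and, Finset.mem_erase, and_imp]
    constructor
    · intro h
      have hyn : y n = i := by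
        have := h n hn; rwa [Function.update_self] at this
      refine ⟨fun m hmn hm => ?_, hyn⟩
      have := h m hm; rwa [Function.update_of_ne hmn] at this
    · rintro ⟨h1, h2⟩ m hm
      by_cases hmn : m = n
      · subst hmn; rw [h2, Function.update_self]
      · rw [Function.update_of_ne hmn, h1 m hmn hm]
  have hcompl : (α.erase n)ᶜ = insert n αᶜ := Finset.compl_erase
  rw [← Finset.sum_fiberwise_of_maps_to (g := fun y : (m : Fin N) → Fin (I m) => y n)
      (t := (Finset.univ : Finset (Fin (I n)))) (fun _ _ => Finset.mem_univ _)]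
  apply Finset.sum_congr rfl
  intro i _
  rw [Finset.mul_sum, ← hset]
  apply Finset.sum_congr rfl
  intro y hy
  have hyn : y n = i := by
    have := (Finset.mem_filter.mp hy).2 n hn
    rwa [Function.update_self] at this
  rw [hcompl, Finset.prod_insert (by simpa using hn), hyn, mul_assoc]

lemma sum_w_anova (hw1 : ∀ n, ∑ i, w n i = 1) {α : Finset (Fin N)} : ∀ {n : Fin N}, n ∈ α →
    ∀ x : (n : Fin N) → Fin (I n),
    ∑ i, w n i * anova w f α (Function.update x n i) = 0 := by
  induction α using Finset.strongInduction with
  | _ α ih =>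
    intro n hn x
    simp only [anova_eq w f α, mul_sub]
    rw [Finset.sum_sub_distrib, sum_w_partialE w f hn x]
    have hswap : ∑ i, w n i * ∑ β ∈ α.powerset.erase α, anova w f β (Function.update x n i)
        = ∑ β ∈ α.powerset.erase α, ∑ i, w n i * anova w f β (Function.update x n i) := by
      rw [Finset.sum_comm]
      apply Finset.sum_congr rfl
      intro i _
      rw [Finset.mul_sum]
    rw [hswap]
    have hright : ∑ β ∈ α.powerset.erase α, ∑ i, w n i * anova w f β (Function.update x n i)
        = ∑ β ∈ (α.powerset.erase α).filter (fun β => n ∉ β), anova w f β x := by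
      rw [← Finset.sum_filter_add_sum_filter_not (α.powerset.erase α) (fun β => n ∉ β)]
      have h0 : ∑ β ∈ (α.powerset.erase α).filter (fun β => ¬ n ∉ β),
          ∑ i, w n i * anova w f β (Function.update x n i) = 0 := by
        apply Finset.sum_eq_zero
        intro β hβ
        rw [Finset.mem_filter] at hβ
        have hβ' := Finset.mem_erase.mp hβ.1
        have hsub : β ⊂ α := lt_of_le_of_ne (Finset.mem_powerset.mp hβ'.2) hβ'.1
        exact ih β hsub (not_not.mp hβ.2) x
      rw [h0, add_zero]
      apply Finset.sum_congr rfl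
      intro β hβ
      rw [Finset.mem_filter] at hβ
      have : ∀ i, anova w f β (Function.update x n i) = anova w f β x := by
        intro i
        apply anova_congr
        intro m hm
        apply Function.update_of_ne
        intro h; subst h; exact hβ.2 hm
      simp only [this, ← Finset.sum_mul, hw1 n, one_mul]
    rw [hright, partialE_eq_sum_anova]
    have hset : (α.erase n).powerset = (α.powerset.erase α).filter (fun β => n ∉ β) := by
      ext β
      simp only [Finset.mem_powerset, Finset.mem_filter, Finset.mem_erase,
        Finset.subset_erase]
      constructor
      · rintro ⟨h1, h2⟩
        exact ⟨⟨fun h => h2 (h ▸ hn), h1⟩, h2⟩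
      · rintro ⟨⟨_, h1⟩, h2⟩
        exact ⟨h1, h2⟩
    rw [hset, sub_self]

end Aux

/-- distinct ANOVA terms are orthogonal with respect to the product
measure: `E[f_α · f_β] = 0` for `α ≠ β`. -/
theorem anova_orthogonal
    {N : ℕ} (hN : 1 ≤ N) {I : Fin N → ℕ} (hI : ∀ n, 1 ≤ I n)
    (w : ∀ n : Fin N, Fin (I n) → ℝ)
    (hw0 : ∀ n i, 0 ≤ w n i) (hw1 : ∀ n, ∑ i, w n i = 1)
    (f : ((n : Fin N) → Fin (I n)) → ℝ)
    (α β : Finset (Fin N)) (hαβ : α ≠ β) :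
    ∑ x : (n : Fin N) → Fin (I n),
      (∏ n, w n (x n)) * (anova w f α x * anova w f β x) = 0 := by
  have key : ∀ (α β : Finset (Fin N)) (n : Fin N), n ∈ β → n ∉ α →
      ∑ x : (n : Fin N) → Fin (I n),
        (∏ n, w n (x n)) * (anova w f α x * anova w f β x) = 0 := by
    intro α β n hnβ hnα
    set e := Equiv.piSplitAt n (fun m => Fin (I m)) with he
    rw [← Equiv.sum_comp e.symm
      (fun x => (∏ n, w n (x n)) * (anova w f α x * anova w f β x))]
    rw [Fintype.sum_prod_type_right]
    apply Finset.sum_eq_zero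
    intro z _
    set x₀ : (m : Fin N) → Fin (I m) := e.symm (⟨0, hI n⟩, z) with hx₀
    have hupd : ∀ i : Fin (I n), e.symm (i, z) = Function.update x₀ n i := by
      intro i
      funext m
      by_cases h : m = n
      · subst h
        simp [hx₀, he, Equiv.piSplitAt, Function.update]
      · simp [hx₀, he, Equiv.piSplitAt, Function.update, h]
    simp only [hupd]
    have hprod : ∀ i : Fin (I n), (∏ m, w m (Function.update x₀ n i m))
        = w n i * ∏ m ∈ Finset.univ.erase n, w m (x₀ m) := by
      intro i
      rw [← Finset.mul_prod_erase Finset.univ _ (Finset.mem_univ n),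
        Function.update_self]
      congr 1
      apply Finset.prod_congr rfl
      intro m hm
      rw [Function.update_of_ne (Finset.mem_erase.mp hm).1]
    have hA : ∀ i : Fin (I n), anova w f α (Function.update x₀ n i) = anova w f α x₀ := by
      intro i
      apply anova_congr
      intro m hm
      apply Function.update_of_ne
      intro h; subst h; exact hnα hm
    calc ∑ i : Fin (I n), (∏ m, w m (Function.update x₀ n i m)) *
            (anova w f α (Function.update x₀ n i) * anova w f β (Function.update x₀ n i))
        = (∏ m ∈ Finset.univ.erase n, w m (x₀ m)) * anova w f α x₀ *
            ∑ i : Fin (I n), w n i * anova w f β (Function.update x₀ n i) := by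
          rw [Finset.mul_sum]
          apply Finset.sum_congr rfl
          intro i _
          rw [hprod, hA]
          ring
      _ = 0 := by rw [sum_w_anova w f hw1 hnβ x₀, mul_zero]
  by_cases h : β ⊆ α
  · have h' : ¬ α ⊆ β := fun h' => hαβ (Finset.Subset.antisymm h' h)
    obtain ⟨n, hnα, hnβ⟩ := Finset.not_subset.mp h'
    have := key β α n hnα hnβ
    rw [← this]
    apply Finset.sum_congr rfl
    intro x _
    ring
  · obtain ⟨n, hnβ, hnα⟩ := Finset.not_subset.mp h
    exact key α β n hnβ hnα
end

section
/- Let A : ({0,1})^N → ℝ be a tensor given in tensor train format by cores A^(n) : Fin 2 → Matrix (Fin R_{n-1}) (Fin R_n) ℝ (R_0 = R_N = 1), so A[j_1,...,j_N] = A^(1)[j_1] · ... · A^(N)[j_N]. Define new cores B^(n) by B^(n)[0] := A^(n)[0] + A^(n)[1] and B^(n)[1] := A^(n)[1]. Then the tensor B represented by the cores B^(n) satisfies, for every α ⊆ {1,...,N} (identified with its indicator vector in {0,1}^N), B_α = Σ_{β ⊇ α} A_β; i.e., the transformed tensor train represents exactly the superset aggregation of A. -/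
open Finset

/-- The binary tuple (indicator vector) associated to a subset `α ⊆ {1,...,N}`:
`j_n = 1` iff `n ∈ α`. -/
def ind {N : ℕ} (α : Finset (Fin N)) : Fin N → Fin 2 :=
  fun n => if n ∈ α then 1 else 0


section
variable {N : ℕ} (R : Fin (N+1) → ℕ)
  (T : ∀ n : Fin N, Fin 2 → Matrix (Fin (R n.castSucc)) (Fin (R n.succ)) ℝ)

def partialP (f : Fin N → Fin 2) (i : Fin (N+1)) :
    Matrix (Fin (R 0)) (Fin (R i)) ℝ :=
  Fin.induction (motive := fun i => Matrix (Fin (R 0)) (Fin (R i)) ℝ)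
    1 (fun n M => M * T n (f n)) i

lemma partialP_succ (f : Fin N → Fin 2) (i : Fin N) :
    partialP R T f i.succ = partialP R T f i.castSucc * T i (f i) :=
  Fin.induction_succ ..

lemma partialP_congr (f g : Fin N → Fin 2) (i : Fin (N+1))
    (h : ∀ n : Fin N, n.castSucc < i → f n = g n) :
    partialP R T f i = partialP R T g i := by
  induction i using Fin.induction with
  | zero => rfl
  | succ i ih =>
    rw [partialP_succ, partialP_succ, ih (fun n hn => h n (hn.trans Fin.castSucc_lt_succ)),
      h i Fin.castSucc_lt_succ]
end

section
variable {N : ℕ} (R : Fin (N+1) → ℕ)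
  (A : ∀ n : Fin N, Fin 2 → Matrix (Fin (R n.castSucc)) (Fin (R n.succ)) ℝ)

lemma key (α : Finset (Fin N)) (i : Fin (N+1)) :
    partialP R (fun n k => if k = 0 then A n 0 + A n 1 else A n 1) (ind α) i
      = ∑ γ ∈ ((Finset.univ.filter fun n : Fin N => n.castSucc < i) \ α).powerset,
          partialP R A (ind (γ ∪ α)) i := by
  induction i using Fin.induction with
  | zero =>
    have h : (Finset.univ.filter fun n : Fin N => n.castSucc < 0) = ∅ := by
      apply Finset.filter_false_of_mem
      intro n _
      exact (Fin.not_lt_zero _ : ¬ n.castSucc < 0)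
    rw [h]
    simp [partialP]
  | succ i ih =>
    have hS : (Finset.univ.filter fun n : Fin N => n.castSucc < i.succ)
        = insert i (Finset.univ.filter fun n : Fin N => n.castSucc < i.castSucc) := by
      ext n
      simp [Fin.castSucc_lt_succ_iff, Fin.castSucc_lt_castSucc_iff, le_iff_lt_or_eq, or_comm]
    have hiS : i ∉ (Finset.univ.filter fun n : Fin N => n.castSucc < i.castSucc) := by
      simp
    rw [partialP_succ, ih, hS]
    by_cases hiα : i ∈ α
    · rw [Finset.insert_sdiff_of_mem _ hiα]
      have hind : ind α i = 1 := by simp [ind, hiα]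
      rw [hind, if_neg (by decide : ¬ (1 : Fin 2) = 0), Matrix.sum_mul]
      apply Finset.sum_congr rfl
      intro γ hγ
      have h1 : ind (γ ∪ α) i = 1 := by simp [ind, hiα]
      rw [partialP_succ, h1]
    · rw [Finset.insert_sdiff_of_notMem _ hiα,
        Finset.sum_powerset_insert (by simp [hiS] : i ∉ (Finset.univ.filter fun n : Fin N => n.castSucc < i.castSucc) \ α)]
      have hind : ind α i = 0 := by simp [ind, hiα]
      rw [hind, if_pos rfl, Matrix.mul_add, Matrix.sum_mul, Matrix.sum_mul]
      congr 1
      · apply Finset.sum_congr rfl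
        intro γ hγ
        have hiγ : i ∉ γ := fun h => hiS (Finset.mem_sdiff.mp (Finset.mem_powerset.mp hγ h)).1
        have : ind (γ ∪ α) i = 0 := by simp [ind, hiγ, hiα]
        rw [partialP_succ, this]
      · apply Finset.sum_congr rfl
        intro γ hγ
        have hiγ : i ∉ γ := fun h => hiS (Finset.mem_sdiff.mp (Finset.mem_powerset.mp hγ h)).1
        have h1 : ind (insert i γ ∪ α) i = 1 := by simp [ind]
        rw [partialP_succ, h1]
        congr 1
        apply partialP_congr
        intro n hn
        have hni : n ≠ i := by
          rintro rfl; exact absurd hn (lt_irrefl _)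
        simp [ind, Finset.mem_insert, hni]
end

/-- replacing each core slice pair `(A^(n)[0], A^(n)[1])` by
`(A^(n)[0] + A^(n)[1], A^(n)[1])` turns a TT tensor `A` on `{0,1}^N` into the tensor of
superset aggregations: `B_α = Σ_{β ⊇ α} A_β`. -/
theorem tt_superset_aggregation
    {N : ℕ} (hN : 1 ≤ N)
    (R : Fin (N+1) → ℕ) (hR0 : R 0 = 1) (hRN : R (Fin.last N) = 1)
    (A : ∀ n : Fin N, Fin 2 → Matrix (Fin (R n.castSucc)) (Fin (R n.succ)) ℝ)
    (α : Finset (Fin N)) (i : Fin (R 0)) (j : Fin (R (Fin.last N))) :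
    ttProd R (fun n k => if k = 0 then A n 0 + A n 1 else A n 1) (ind α) i j
      = ∑ β ∈ Finset.univ.filter (fun β : Finset (Fin N) => α ⊆ β),
          ttProd R A (ind β) i j := by
  have h1 : ttProd R (fun n k => if k = 0 then A n 0 + A n 1 else A n 1) (ind α)
      = partialP R (fun n k => if k = 0 then A n 0 + A n 1 else A n 1) (ind α) (Fin.last N) := rfl
  have h2 : ∀ β, ttProd R A (ind β) = partialP R A (ind β) (Fin.last N) := fun _ => rfl
  have huniv : (Finset.univ.filter fun n : Fin N => n.castSucc < Fin.last N) = Finset.univ := by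
    apply Finset.filter_true_of_mem
    intro n _
    exact Fin.castSucc_lt_last n
  have := key R A α (Fin.last N)
  rw [huniv] at this
  rw [h1, this]
  rw [Matrix.sum_apply]
  refine Finset.sum_nbij' (fun γ => γ ∪ α) (fun β => β \ α) ?_ ?_ ?_ ?_ ?_
  · intro γ hγ
    simp [Finset.subset_union_right]
  · intro β hβ
    simp only [Finset.mem_powerset]
    exact Finset.sdiff_subset_sdiff (Finset.subset_univ _) le_rfl
  · intro γ hγ
    have hsub : γ ⊆ Finset.univ \ α := Finset.mem_powerset.mp hγ
    show (γ ∪ α) \ α = γ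
    rw [Finset.union_sdiff_right]
    exact Finset.sdiff_eq_self_of_disjoint
      (Finset.disjoint_left.mpr fun a ha hb => (Finset.mem_sdiff.mp (hsub ha)).2 hb)
  · intro β hβ
    exact Finset.sdiff_union_of_subset (Finset.mem_filter.mp hβ).2
  · intro γ hγ
    rw [h2]
end

section
/- Let f : ∏_{n=1}^N Fin I_n → ℝ be an additive function, f(x) = Σ_{n=1}^N g_n(x_n) for functions g_n : Fin I_n → ℝ, with N ≥ 2. Then f admits an exact tensor train representation with all ranks equal to 2: defining the first core as the 1×2 row vector (g_1(x_1), 1), the middle cores (1 < n < N) as the 2×2 matrix with rows (1, 0) and (g_n(x_n), 1), and the last core as the 2×1 column vector (1, g_N(x_N))ᵀ, the ordered matrix product reconstructs f(x) at every x. -/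
open Finset

/-- TT ranks for the rank-2 representation of an additive function: boundary ranks `1`,
all internal ranks equal to `2`. -/
def addRank (N : ℕ) : Fin (N+1) → ℕ :=
  fun i => if i = 0 ∨ i = Fin.last N then 1 else 2

lemma sum_fin_eq_two {m : ℕ} (hm : m = 2) (F : ℕ → ℝ) : ∑ c : Fin m, F ↑c = F 0 + F 1 := by
  subst hm; simp [Fin.sum_univ_two]


/-- an additive function `f(x) = Σ_n g_n(x_n)` (with `N ≥ 2`) admits
an exact tensor train representation with all internal ranks equal to 2: first core the
row vector `(g_1(x_1), 1)`, middle cores the `2 × 2` matrices with rows `(1, 0)` and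
`(g_n(x_n), 1)`, and last core the column vector `(1, g_N(x_N))ᵀ`. -/
theorem additive_function_tt_rank_two
    {N : ℕ} (hN : 2 ≤ N) {I : Fin N → ℕ}
    (g : ∀ n : Fin N, Fin (I n) → ℝ)
    (f : ((n : Fin N) → Fin (I n)) → ℝ)
    (hf : ∀ x, f x = ∑ n, g n (x n))
    (x : (n : Fin N) → Fin (I n))
    (i : Fin (addRank N 0)) (j : Fin (addRank N (Fin.last N))) :
    ttProd (addRank N)
      (fun n xn => Matrix.of fun a b =>
        if (n : ℕ) = 0 then
          (if (b : ℕ) = 0 then g n xn else 1)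
        else if (n : ℕ) = N - 1 then
          (if (a : ℕ) = 0 then 1 else g n xn)
        else
          (if (a : ℕ) = 0 ∧ (b : ℕ) = 0 then 1
           else if (a : ℕ) = 1 ∧ (b : ℕ) = 0 then g n xn
           else if (a : ℕ) = 1 ∧ (b : ℕ) = 1 then 1 else 0))
      x i j = f x := by
  obtain ⟨M, rfl⟩ : ∃ M, N = M + 2 := ⟨N - 2, by omega⟩
  set A : ∀ n : Fin (M+2), Matrix (Fin (addRank (M+2) n.castSucc)) (Fin (addRank (M+2) n.succ)) ℝ :=
    fun n => Matrix.of fun a b =>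
        if (n : ℕ) = 0 then
          (if (b : ℕ) = 0 then g n (x n) else 1)
        else if (n : ℕ) = (M+2) - 1 then
          (if (a : ℕ) = 0 then 1 else g n (x n))
        else
          (if (a : ℕ) = 0 ∧ (b : ℕ) = 0 then 1
           else if (a : ℕ) = 1 ∧ (b : ℕ) = 0 then g n (x n)
           else if (a : ℕ) = 1 ∧ (b : ℕ) = 1 then 1 else 0) with hA
  set P : ∀ k : Fin ((M+2)+1), Matrix (Fin (addRank (M+2) 0)) (Fin (addRank (M+2) k)) ℝ :=
    Fin.induction (motive := fun k => Matrix (Fin (addRank (M+2) 0)) (Fin (addRank (M+2) k)) ℝ)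
      1 (fun n M => M * A n) with hP
  have hchain : ttProd (addRank (M+2)) (fun n xn => Matrix.of fun a b =>
        if (n : ℕ) = 0 then
          (if (b : ℕ) = 0 then g n xn else 1)
        else if (n : ℕ) = (M+2) - 1 then
          (if (a : ℕ) = 0 then 1 else g n xn)
        else
          (if (a : ℕ) = 0 ∧ (b : ℕ) = 0 then 1
           else if (a : ℕ) = 1 ∧ (b : ℕ) = 0 then g n xn
           else if (a : ℕ) = 1 ∧ (b : ℕ) = 1 then 1 else 0)) x
      = P (Fin.last (M+2)) := rfl
  rw [hchain]
  set S : ℕ → ℝ := fun k => ∑ n : Fin (M+2), if (n : ℕ) < k then g n (x n) else 0 with hS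
  have hR0 : addRank (M+2) 0 = 1 := by simp [addRank]
  have hi0 : (i : ℕ) = 0 := by have := i.isLt; omega
  have hRmid : ∀ k (h : k < (M+2) + 1), k ≠ 0 → k ≠ (M+2) → addRank (M+2) ⟨k, h⟩ = 2 := by
    intro k h hk0 hkN
    unfold addRank
    have e0 : ¬((⟨k, h⟩ : Fin ((M+2)+1)) = 0) := by
      simp only [Fin.ext_iff, Fin.val_zero]; omega
    have el : ¬((⟨k, h⟩ : Fin ((M+2)+1)) = Fin.last (M+2)) := by
      simp only [Fin.ext_iff, Fin.val_last]; omega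
    rw [if_neg (by tauto)]
  have hSsucc : ∀ k (hk : k < (M+2)), S (k+1) = S k + g ⟨k, hk⟩ (x ⟨k, hk⟩) := by
    intro k hk
    have step : ∀ n : Fin (M+2), (if (n : ℕ) < k + 1 then g n (x n) else 0)
        = (if (n : ℕ) < k then g n (x n) else 0) + (if n = ⟨k, hk⟩ then g n (x n) else 0) := by
      intro n
      by_cases h1 : (n : ℕ) < k
      · rw [if_pos (by omega), if_pos h1, if_neg (by rw [Fin.ext_iff]; simp; omega)]
        ring
      · by_cases h2 : (n : ℕ) = k
        · rw [if_pos (by omega), if_neg h1, if_pos (by rw [Fin.ext_iff]; simpa)]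
          ring
        · rw [if_neg (by omega), if_neg h1, if_neg (by rw [Fin.ext_iff]; simpa)]
          ring
    rw [hS]
    simp only [step, Finset.sum_add_distrib]
    rw [Finset.sum_ite_eq' Finset.univ (⟨k, hk⟩ : Fin (M+2))]
    simp [hS]
  -- the invariant
  have key : ∀ k (h1 : 1 ≤ k) (h2 : k < (M+2)) (b : Fin (addRank (M+2) (Fin.castSucc ⟨k, h2⟩))),
      P (Fin.castSucc ⟨k, h2⟩) i b = if (b : ℕ) = 0 then S k else 1 := by
    intro k
    induction k with
    | zero => omega
    | succ k ih =>
      intro h1 h2 b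
      have hk1N : k + 1 < (M+2) + 1 := by omega
      have hb2 : addRank (M+2) (Fin.castSucc (⟨k+1, h2⟩ : Fin (M+2))) = 2 :=
        hRmid (k+1) hk1N (by omega) (by omega)
      have hbv : (b : ℕ) < 2 := by
        have := b.isLt
        omega
      rcases Nat.eq_zero_or_pos k with hk0 | hk0
      · -- first factor: P 1 = 1 * A 0
        subst hk0
        have h0N : 0 < (M+2) := by omega
        have hstep : P (Fin.castSucc ⟨1, h2⟩)
            = P (Fin.castSucc ⟨0, h0N⟩) * A ⟨0, h0N⟩ := rfl
        have hid : P (Fin.castSucc (⟨0, h0N⟩ : Fin (M+2)))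
            = (1 : Matrix (Fin (addRank (M+2) 0)) (Fin (addRank (M+2) 0)) ℝ) := rfl
        have hPA : P (Fin.castSucc ⟨0, h0N⟩) * A ⟨0, h0N⟩ = A ⟨0, h0N⟩ := Matrix.one_mul _
        rw [hstep, hPA]
        have hAe : A ⟨0, h0N⟩ i b = if (b : ℕ) = 0 then g ⟨0, h0N⟩ (x ⟨0, h0N⟩) else 1 := by
          rw [hA]
          simp
          rfl
        rw [hAe, hSsucc 0 h0N]
        simp [hS]
      · have h2' : k < (M+2) := by omega
        have hstep : P (Fin.castSucc ⟨k+1, h2⟩)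
            = P (Fin.castSucc ⟨k, h2'⟩) * A ⟨k, h2'⟩ := rfl
        rw [hstep, Matrix.mul_apply]
        have hmid : addRank (M+2) (Fin.castSucc (⟨k, h2'⟩ : Fin (M+2))) = 2 :=
          hRmid k (by omega) (by omega) (by omega)
        set F : ℕ → ℝ := fun c =>
          (if c = 0 then S k else 1) *
          (if c = 0 ∧ (b : ℕ) = 0 then 1
           else if c = 1 ∧ (b : ℕ) = 0 then g ⟨k, h2'⟩ (x ⟨k, h2'⟩)
           else if c = 1 ∧ (b : ℕ) = 1 then 1 else 0) with hF
        have hsum : ∑ c, P (Fin.castSucc ⟨k, h2'⟩) i c * A ⟨k, h2'⟩ c b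
            = ∑ c : Fin (addRank (M+2) (Fin.castSucc ⟨k, h2'⟩)), F ↑c := by
          refine Finset.sum_congr rfl fun c _ => ?_
          have e1 : P (Fin.castSucc ⟨k, h2'⟩) i c = if (c : ℕ) = 0 then S k else 1 :=
            ih (by omega) h2' c
          have e2 : A ⟨k, h2'⟩ c b =
              (if (c : ℕ) = 0 ∧ (b : ℕ) = 0 then 1
               else if (c : ℕ) = 1 ∧ (b : ℕ) = 0 then g ⟨k, h2'⟩ (x ⟨k, h2'⟩)
               else if (c : ℕ) = 1 ∧ (b : ℕ) = 1 then 1 else 0) := by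
            rw [hA]
            have hkne : ¬ (k = 0) := by omega
            have hkn1 : ¬ (k = (M+2) - 1) := by omega
            have hkn1' : ¬ (k = M + 1) := by omega
            simp [hkne, hkn1, hkn1']
          rw [e1, e2, hF]
        rw [hsum, sum_fin_eq_two hmid F, hF]
        have hb01 : (b : ℕ) = 0 ∨ (b : ℕ) = 1 := by omega
        rcases hb01 with hb | hb <;>
          · rw [hb, hSsucc k h2']
            norm_num
  -- the final step
  have hj0 : (j : ℕ) = 0 := by
    have := j.isLt
    have hRl : addRank (M+2) (Fin.last (M+2)) = 1 := by simp [addRank]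
    omega
  have hM1 : M + 1 < (M+2) := by omega
  have hstep : P (Fin.last (M+2))
      = P (Fin.castSucc ⟨M+1, hM1⟩) * A ⟨M+1, hM1⟩ := rfl
  rw [hstep, Matrix.mul_apply]
  have hmid : addRank (M+2) (Fin.castSucc (⟨M+1, hM1⟩ : Fin (M+2))) = 2 :=
    hRmid (M+1) (by omega) (by omega) (by omega)
  set F : ℕ → ℝ := fun c =>
    (if c = 0 then S (M+1) else 1) *
    (if c = 0 then 1 else g ⟨M+1, hM1⟩ (x ⟨M+1, hM1⟩)) with hF
  have hsum : ∑ c, P (Fin.castSucc ⟨M+1, hM1⟩) i c * A ⟨M+1, hM1⟩ c j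
      = ∑ c : Fin (addRank (M+2) (Fin.castSucc ⟨M+1, hM1⟩)), F ↑c := by
    refine Finset.sum_congr rfl fun c _ => ?_
    have e1 : P (Fin.castSucc ⟨M+1, hM1⟩) i c = if (c : ℕ) = 0 then S (M+1) else 1 :=
      key (M+1) (by omega) hM1 c
    have e2 : A ⟨M+1, hM1⟩ c j =
        (if (c : ℕ) = 0 then 1 else g ⟨M+1, hM1⟩ (x ⟨M+1, hM1⟩)) := by
      rw [hA]
      simp [hj0]
    rw [e1, e2, hF]
  rw [hsum, sum_fin_eq_two hmid F, hF]
  have hSfull : S (M+2) = f x := by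
    rw [hf, hS]
    exact Finset.sum_congr rfl fun n _ => if_pos (by omega)
  rw [← hSfull, hSsucc (M+1) hM1]
  norm_num
end
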